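/- Let y ∈ ℝⁿ, γ ≥ 0, α_1,...,α_{n-1} ≥ 0. Define ỹ_i = −Σ_{t=i}^n y_t for i ∈ [n+1] (so ỹ_{n+1} = 0), α̃_1 = α̃_{n+1} = 0 and α̃_{i+1} = α_i for i ∈ [n−1]. Let x* be the unique minimizer of (1/2)Σ_{t=1}^n (x_t − y_t)² + γ Σ_{t=1}^{n-1} α_t |x_{t+1} − x_t| and let w* be the unique minimizer of Σ_{i=1}^{n} (w_{i+1} − w_i)² subject to |w_i − ỹ_i| ≤ γ α̃_i for all i ∈ [n+1]. Then x*_t = w*_{t+1} − w*_t for all t ∈ [n]. -/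

import Mathlib

lemma wfl_abel (N : ℕ) (A U : ℕ → ℝ) :
    ∑ k ∈ Finset.range (N+1), A k * (U (k+1) - U k)
      = A N * U (N+1) - A 0 * U 0 - ∑ j ∈ Finset.range N, (A (j+1) - A j) * U (j+1) := by
  induction N with
  | zero => simp; ring
  | succ N ih => rw [Finset.sum_range_succ, ih, Finset.sum_range_succ]; ring

lemma wfl_fact1 (s c d m : ℝ) (hm : 0 ≤ m) (hc : 0 ≤ c)
    (h : ∀ ε : ℝ, 0 ≤ ε * s + ε^2 * m / 2 + c * (|d + ε| - |d|)) : |s| ≤ c := by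
  have h' : ∀ ε : ℝ, 0 ≤ ε * s + ε^2 * m / 2 + c * |ε| := by
    intro ε
    have h1 : |d + ε| - |d| ≤ |ε| := by
      have := abs_add_le d ε
      linarith
    nlinarith [h ε, mul_le_mul_of_nonneg_left h1 hc]
  rw [abs_le]
  constructor
  · have key : ∀ ε : ℝ, 0 < ε → -s ≤ c + ε := by
      intro ε hε
      have hδ : 0 < 2*ε/(m+1) := by positivity
      have hh := h' (2*ε/(m+1))
      rw [abs_of_pos hδ] at hh
      have h2 : (2*ε/(m+1)) * (m+1) = 2*ε := by field_simp
      nlinarith [hh, hδ, mul_pos hδ hε]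
    linarith [le_of_forall_pos_le_add key]
  · have key : ∀ ε : ℝ, 0 < ε → s ≤ c + ε := by
      intro ε hε
      have hδ : 0 < 2*ε/(m+1) := by positivity
      have hh := h' (-(2*ε/(m+1)))
      rw [abs_neg, abs_of_pos hδ] at hh
      have h2 : (2*ε/(m+1)) * (m+1) = 2*ε := by field_simp
      nlinarith [hh, hδ, mul_pos hδ hε]
    exact le_of_forall_pos_le_add key

lemma wfl_fact2 (s c d m : ℝ) (hm : 0 ≤ m) (hc : 0 ≤ c)
    (h : ∀ ε : ℝ, 0 ≤ ε * s + ε^2 * m / 2 + c * (|d + ε| - |d|)) :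
    d * s + |d| * c ≤ 0 := by
  rcases eq_or_ne d 0 with hd | hd
  · simp [hd]
  have key : ∀ ε : ℝ, 0 < ε → d * s + |d| * c ≤ 0 + ε := by
    intro ε hε
    set lam := min 1 (2*ε/(d^2*m+1)) with hlamdef
    have hpos : (0:ℝ) < d^2*m+1 := by positivity
    have hlam0 : 0 < lam := lt_min one_pos (by positivity)
    have hlam1 : lam ≤ 1 := min_le_left _ _
    have h2 : lam ≤ 2*ε/(d^2*m+1) := min_le_right _ _
    have h3 : lam * (d^2*m+1) ≤ 2*ε := by
      rw [← le_div_iff₀ hpos]; exact h2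
    have hh := h (-(lam*d))
    have habs : |d + -(lam*d)| = (1 - lam)*|d| := by
      rw [show d + -(lam*d) = (1-lam)*d by ring, abs_mul, abs_of_nonneg (by linarith)]
    rw [habs] at hh
    -- hh : 0 ≤ -(lam*d)*s + (lam*d)^2*m/2 + c*((1-lam)*|d| - |d|)
    -- i.e. lam*(d*s + c*|d|) ≤ lam^2*d^2*m/2 ≤ lam*ε
    have h4 : lam * (d*s + |d| * c) ≤ lam^2 * d^2 * m / 2 := by nlinarith [hh]
    have h5 : lam^2 * d^2 * m ≤ lam * (2*ε) := by
      calc lam^2 * d^2 * m = lam * (lam * (d^2*m)) := by ring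
        _ ≤ lam * (2*ε) := by
            apply mul_le_mul_of_nonneg_left _ hlam0.le
            nlinarith [h3]
    have h6 : lam * (d*s + |d| * c) ≤ lam * ε := by linarith
    have h7 := le_of_mul_le_mul_left h6 hlam0
    linarith
  have := le_of_forall_pos_le_add key
  linarith

lemma wfl_split (n : ℕ) (f : Fin (n+1) → ℝ) (t : Fin (n+1)) :
    ∑ u ∈ Finset.univ.filter (fun u : Fin (n+1) => (t:ℕ) ≤ (u:ℕ)), f u
      = f t + ∑ u ∈ Finset.univ.filter (fun u : Fin (n+1) => (t:ℕ)+1 ≤ (u:ℕ)), f u := by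
  have hins : Finset.univ.filter (fun u : Fin (n+1) => (t:ℕ) ≤ (u:ℕ))
      = insert t (Finset.univ.filter (fun u : Fin (n+1) => (t:ℕ)+1 ≤ (u:ℕ))) := by
    ext u
    simp only [Finset.mem_filter, Finset.mem_insert, Finset.mem_univ, true_and, Fin.ext_iff]
    omega
  rw [hins, Finset.sum_insert (by simp only [Finset.mem_filter, Finset.mem_univ, true_and]; omega)]

lemma wfl_expand (n : ℕ) (a b v : Fin n → ℝ) (ε : ℝ) :
    ∑ t, (a t + ε * v t - b t)^2
      = ∑ t, (a t - b t)^2 + ε * (2 * ∑ t, v t * (a t - b t)) + ε^2 * ∑ t, (v t)^2 := by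
  rw [Finset.mul_sum, Finset.mul_sum, Finset.mul_sum, ← Finset.sum_add_distrib, ← Finset.sum_add_distrib]
  exact Finset.sum_congr rfl fun t _ => by ring

def wflS (n : ℕ) (f : Fin (n+1) → ℝ) (i : ℕ) : ℝ :=
  ∑ t ∈ Finset.univ.filter (fun t : Fin (n+1) => i ≤ (t:ℕ)), f t



/-- Spring reformulation of the weighted 1-D fused lasso (input size `n+1`):
if `x*` minimizes `(1/2)Σ (x_t − y_t)² + γ Σ α_t |x_{t+1} − x_t|` and `w*` minimizes
`Σ (w_{i+1} − w_i)²` subject to `|w_i − ỹ_i| ≤ γ α̃_i`, where `ỹ_i = −Σ_{t ≥ i} y_t`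
(`ỹ_{n+1} = 0`), `α̃_0 = α̃_{n+1} = 0`, `α̃_{i+1} = α_i`, then
`x*_t = w*_{t+1} − w*_t` for all `t`. -/
theorem weighted_fused_lasso_spring_representation (n : ℕ)
    (y : Fin (n + 1) → ℝ) (γ : ℝ) (hγ : 0 ≤ γ)
    (α : Fin n → ℝ) (hα : ∀ t, 0 ≤ α t)
    (yt αt : Fin (n + 2) → ℝ)
    (hyt : ∀ i : Fin (n + 2),
      yt i = -∑ t ∈ Finset.univ.filter (fun t : Fin (n + 1) => (i : ℕ) ≤ (t : ℕ)), y t)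
    (hαt0 : αt 0 = 0) (hαtlast : αt (Fin.last (n + 1)) = 0)
    (hαt : ∀ i : Fin n, αt i.succ.castSucc = α i)
    (xs : Fin (n + 1) → ℝ)
    (hxs : ∀ x : Fin (n + 1) → ℝ,
      (1 / 2) * ∑ t, (xs t - y t) ^ 2 + γ * ∑ t : Fin n, α t * |xs t.succ - xs t.castSucc| ≤
      (1 / 2) * ∑ t, (x t - y t) ^ 2 + γ * ∑ t : Fin n, α t * |x t.succ - x t.castSucc|)
    (ws : Fin (n + 2) → ℝ)
    (hwsfeas : ∀ i, |ws i - yt i| ≤ γ * αt i)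
    (hws : ∀ w : Fin (n + 2) → ℝ, (∀ i, |w i - yt i| ≤ γ * αt i) →
      (∑ i : Fin (n + 1), (ws i.succ - ws i.castSucc) ^ 2) ≤
        ∑ i : Fin (n + 1), (w i.succ - w i.castSucc) ^ 2) :
    ∀ t : Fin (n + 1), xs t = ws t.succ - ws t.castSucc := by
  set S : ℕ → ℝ := wflS n (fun t => xs t - y t) with hSdef
  -- generic perturbation inequality
  have base : ∀ v : Fin (n + 1) → ℝ, ∀ ε : ℝ,
      0 ≤ ε * (∑ t, v t * (xs t - y t)) + ε ^ 2 * (∑ t, (v t) ^ 2) / 2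
        + γ * ((∑ t : Fin n, α t * |xs t.succ + ε * v t.succ - (xs t.castSucc + ε * v t.castSucc)|)
               - ∑ t : Fin n, α t * |xs t.succ - xs t.castSucc|) := by
    intro v ε
    have h := hxs (fun t => xs t + ε * v t)
    rw [wfl_expand] at h
    linarith
  -- S 0 = 0
  have hS0 : S 0 = 0 := by
    have hb : ∀ ε : ℝ, 0 ≤ ε * S 0 + ε ^ 2 * (∑ t : Fin (n+1), (1:ℝ)) / 2 := by
      intro ε
      have hb := base (fun _ => 1) ε
      have e1 : ∑ t : Fin (n+1), (1:ℝ) * (xs t - y t) = S 0 := by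
        rw [hSdef]
        unfold wflS
        rw [Finset.filter_true_of_mem (fun t _ => Nat.zero_le _)]
        exact Finset.sum_congr rfl fun t _ => by ring
      have e2 : (∑ t : Fin n, α t * |xs t.succ + ε * 1 - (xs t.castSucc + ε * 1)|)
          = ∑ t : Fin n, α t * |xs t.succ - xs t.castSucc| := by
        refine Finset.sum_congr rfl fun t _ => ?_
        rw [show xs t.succ + ε * 1 - (xs t.castSucc + ε * 1) = xs t.succ - xs t.castSucc by ring]
      rw [e1, e2] at hb
      have e3 : ∑ t : Fin (n+1), ((1:ℝ))^2 = ∑ t : Fin (n+1), (1:ℝ) := by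
        refine Finset.sum_congr rfl fun t _ => by ring
      rw [e3] at hb
      linarith
    have habs : |S 0| ≤ 0 := by
      refine wfl_fact1 (S 0) 0 0 (∑ t : Fin (n+1), (1:ℝ)) ?_ le_rfl ?_
      · exact Finset.sum_nonneg fun t _ => by norm_num
      · intro ε
        have := hb ε
        simpa using this
    have := abs_nonneg (S 0)
    have : |S 0| = 0 := le_antisymm habs (abs_nonneg _)
    exact abs_eq_zero.mp this
  -- S (n+1) = 0
  have hSn1 : S (n+1) = 0 := by
    rw [hSdef]
    unfold wflS
    rw [Finset.filter_false_of_mem, Finset.sum_empty]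
    intro t _
    have := t.isLt
    omega
  -- interior conditions
  have hkey : ∀ j : Fin n, ∃ M : ℝ, 0 ≤ M ∧ ∀ ε : ℝ,
      0 ≤ ε * S ((j:ℕ)+1) + ε ^ 2 * M / 2
        + (γ * α j) * (|(xs j.succ - xs j.castSucc) + ε| - |xs j.succ - xs j.castSucc|) := by
    intro j
    set v : Fin (n+1) → ℝ := fun t => if (j:ℕ)+1 ≤ (t:ℕ) then 1 else 0 with hv
    refine ⟨∑ t, (v t) ^ 2, Finset.sum_nonneg fun t _ => sq_nonneg _, ?_⟩
    intro ε
    have hb := base v ε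
    have hv1 : ∑ t, v t * (xs t - y t) = S ((j:ℕ)+1) := by
      rw [hSdef]
      unfold wflS
      rw [Finset.sum_filter]
      refine Finset.sum_congr rfl fun t _ => ?_
      by_cases h : (j:ℕ)+1 ≤ (t:ℕ) <;> simp [hv, h] <;> intro h' <;> omega
    have habs : (∑ t : Fin n, α t * |xs t.succ + ε * v t.succ - (xs t.castSucc + ε * v t.castSucc)|)
        - ∑ t : Fin n, α t * |xs t.succ - xs t.castSucc|
        = α j * (|(xs j.succ - xs j.castSucc) + ε| - |xs j.succ - xs j.castSucc|) := by
      rw [← Finset.sum_erase_add Finset.univ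
          (fun t : Fin n => α t * |xs t.succ + ε * v t.succ - (xs t.castSucc + ε * v t.castSucc)|)
          (Finset.mem_univ j),
        ← Finset.sum_erase_add Finset.univ
          (fun t : Fin n => α t * |xs t.succ - xs t.castSucc|) (Finset.mem_univ j)]
      have hterm : ∀ t ∈ Finset.univ.erase j,
          α t * |xs t.succ + ε * v t.succ - (xs t.castSucc + ε * v t.castSucc)|
            = α t * |xs t.succ - xs t.castSucc| := by
        intro t ht
        have hne : (t:ℕ) ≠ (j:ℕ) := fun h => (Finset.ne_of_mem_erase ht) (Fin.ext h)
        have hvv : v t.succ = v t.castSucc := by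
          simp only [hv, Fin.val_succ, Fin.coe_castSucc]
          split_ifs with h1 h2 <;> first | rfl | omega
        rw [hvv, show xs t.succ + ε * v t.castSucc - (xs t.castSucc + ε * v t.castSucc)
          = xs t.succ - xs t.castSucc by ring]
      have hj : α j * |xs j.succ + ε * v j.succ - (xs j.castSucc + ε * v j.castSucc)|
          = α j * |(xs j.succ - xs j.castSucc) + ε| := by
        have h1 : v j.succ = 1 := by simp [hv]
        have h2 : v j.castSucc = 0 := by simp [hv]
        rw [h1, h2, show xs j.succ + ε * 1 - (xs j.castSucc + ε * 0)
          = (xs j.succ - xs j.castSucc) + ε by ring]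
      rw [Finset.sum_congr rfl hterm, hj]
      ring
    rw [hv1, habs] at hb
    nlinarith [hb]
  have hfeas : ∀ j : Fin n, |S ((j:ℕ)+1)| ≤ γ * α j := by
    intro j
    obtain ⟨M, hM, hk⟩ := hkey j
    exact wfl_fact1 _ _ _ _ hM (mul_nonneg hγ (hα j)) hk
  have hsign : ∀ j : Fin n,
      (xs j.succ - xs j.castSucc) * S ((j:ℕ)+1)
        + |xs j.succ - xs j.castSucc| * (γ * α j) ≤ 0 := by
    intro j
    obtain ⟨M, hM, hk⟩ := hkey j
    exact wfl_fact2 _ _ _ _ hM (mul_nonneg hγ (hα j)) hk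
  -- the dual-optimal point
  set w : Fin (n + 2) → ℝ := fun i => yt i - S (i:ℕ) with hwdef
  have hwfeas : ∀ i, |w i - yt i| ≤ γ * αt i := by
    intro i
    have e : w i - yt i = -(S (i:ℕ)) := by rw [hwdef]; ring
    rw [e, abs_neg]
    by_cases h0 : i = 0
    · subst h0
      simp only [Fin.val_zero, hαt0, mul_zero, hS0, abs_zero, le_refl]
    by_cases hl : i = Fin.last (n+1)
    · subst hl
      simp only [Fin.val_last, hαtlast, mul_zero, hSn1, abs_zero, le_refl]
    · have hiv1 : 1 ≤ (i:ℕ) := by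
        rcases Nat.eq_zero_or_pos (i:ℕ) with h | h
        · exact absurd (Fin.ext (by simp [h])) h0
        · exact h
      have hivn : (i:ℕ) < n+1 := by
        have h1 : (i:ℕ) < n+2 := i.isLt
        have h2 : (i:ℕ) ≠ n+1 := fun h => hl (Fin.ext (by simp [h, Fin.val_last]))
        omega
      set j : Fin n := ⟨(i:ℕ)-1, by omega⟩ with hj
      have hij : i = j.succ.castSucc := by
        apply Fin.ext
        simp only [Fin.coe_castSucc, Fin.val_succ, hj]
        omega
      rw [hij, hαt j]
      have : ((j.succ.castSucc : Fin (n+2)) : ℕ) = (j:ℕ)+1 := by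
        simp [Fin.coe_castSucc, Fin.val_succ]
      rw [this]
      exact hfeas j
  have hwdiff : ∀ t : Fin (n + 1), w t.succ - w t.castSucc = xs t := by
    intro t
    rw [hwdef]
    simp only []
    rw [hyt t.succ, hyt t.castSucc]
    simp only [Fin.val_succ, Fin.coe_castSucc]
    have h1 := wfl_split n y t
    have h2 := wfl_split n (fun u => xs u - y u) t
    rw [hSdef]
    unfold wflS
    simp only [] at h1 h2 ⊢
    linarith
  -- compare with ws
  have hle := hws w hwfeas
  have hobj : (∑ i : Fin (n + 1), (w i.succ - w i.castSucc) ^ 2) = ∑ t : Fin (n+1), (xs t) ^ 2 :=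
    Finset.sum_congr rfl fun t _ => by rw [hwdiff t]
  set u : Fin (n + 2) → ℝ := fun i => ws i - w i with hudef
  have hu0 : u 0 = 0 := by
    have h1 := hwsfeas 0
    rw [hαt0, mul_zero] at h1
    have h2 : ws 0 = yt 0 := by
      have := abs_nonneg (ws 0 - yt 0)
      have : |ws 0 - yt 0| = 0 := le_antisymm h1 (abs_nonneg _)
      have := abs_eq_zero.mp this
      linarith
    rw [hudef]
    simp only [hwdef, Fin.val_zero, hS0, h2]
    ring
  have hulast : u (Fin.last (n+1)) = 0 := by
    have h1 := hwsfeas (Fin.last (n+1))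
    rw [hαtlast, mul_zero] at h1
    have h2 : ws (Fin.last (n+1)) = yt (Fin.last (n+1)) := by
      have : |ws (Fin.last (n+1)) - yt (Fin.last (n+1))| = 0 := le_antisymm h1 (abs_nonneg _)
      have := abs_eq_zero.mp this
      linarith
    rw [hudef]
    simp only [hwdef, Fin.val_last, hSn1, h2]
    ring
  have hudiff_sign : ∀ j : Fin n, (xs j.succ - xs j.castSucc) * u j.succ.castSucc ≤ 0 := by
    intro j
    have hval : ((j.succ.castSucc : Fin (n+2)) : ℕ) = (j:ℕ)+1 := by
      simp [Fin.coe_castSucc, Fin.val_succ]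
    have hws_j : |ws j.succ.castSucc - yt j.succ.castSucc| ≤ γ * α j := by
      have := hwsfeas j.succ.castSucc
      rwa [hαt j] at this
    have he : u j.succ.castSucc = (ws j.succ.castSucc - yt j.succ.castSucc) + S ((j:ℕ)+1) := by
      rw [hudef]
      simp only [hwdef, hval]
      ring
    set d := xs j.succ - xs j.castSucc with hd
    have h1 : d * (ws j.succ.castSucc - yt j.succ.castSucc) ≤ |d| * (γ * α j) := by
      calc d * (ws j.succ.castSucc - yt j.succ.castSucc)
          ≤ |d * (ws j.succ.castSucc - yt j.succ.castSucc)| := le_abs_self _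
        _ = |d| * |ws j.succ.castSucc - yt j.succ.castSucc| := abs_mul _ _
        _ ≤ |d| * (γ * α j) := mul_le_mul_of_nonneg_left hws_j (abs_nonneg _)
    have h2 := hsign j
    rw [← hd] at h2
    rw [he, mul_add]
    linarith
  have hcross : 0 ≤ ∑ t : Fin (n + 1), xs t * (u t.succ - u t.castSucc) := by
    have hAB : ∀ k, k < n + 2 → min k (n+1) < n + 2 := by omega
    set A : ℕ → ℝ := fun k => xs ⟨min k n, by omega⟩ with hA
    set U : ℕ → ℝ := fun k => u ⟨min k (n+1), by omega⟩ with hU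
    have hsum : ∑ t : Fin (n + 1), xs t * (u t.succ - u t.castSucc)
        = ∑ k ∈ Finset.range (n+1), A k * (U (k+1) - U k) := by
      rw [← Fin.sum_univ_eq_sum_range (fun k => A k * (U (k+1) - U k)) (n+1)]
      refine Finset.sum_congr rfl fun t _ => ?_
      have ht : (t:ℕ) ≤ n := Nat.lt_succ_iff.mp t.isLt
      have e1 : A (t:ℕ) = xs t := by
        show xs ⟨min (t:ℕ) n, _⟩ = xs t
        congr 1 <;> apply Fin.ext <;> simp <;> omega
      have e2 : U ((t:ℕ)+1) = u t.succ := by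
        show u ⟨min ((t:ℕ)+1) (n+1), _⟩ = u t.succ
        congr 1 <;> apply Fin.ext <;> simp <;> omega
      have e3 : U (t:ℕ) = u t.castSucc := by
        show u ⟨min (t:ℕ) (n+1), _⟩ = u t.castSucc
        congr 1 <;> apply Fin.ext <;> simp <;> omega
      rw [e1, e2, e3]
    rw [hsum, wfl_abel n A U]
    have hU1 : U (n+1) = u (Fin.last (n+1)) := by
      show u ⟨min (n+1) (n+1), _⟩ = u (Fin.last (n+1))
      congr 1 <;> apply Fin.ext <;> simp <;> omega
    have hU0 : U 0 = u 0 := by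
      show u ⟨min 0 (n+1), _⟩ = u 0
      congr 1 <;> apply Fin.ext <;> simp <;> omega
    rw [hU1, hU0, hulast, hu0]
    have hterm : ∀ k ∈ Finset.range n, (A (k+1) - A k) * U (k+1) ≤ 0 := by
      intro k hk
      have hkn : k < n := Finset.mem_range.mp hk
      have e1 : A (k+1) = xs (⟨k, hkn⟩ : Fin n).succ := by
        show xs ⟨min (k+1) n, _⟩ = _
        congr 1 <;> apply Fin.ext <;> simp <;> omega
      have e2 : A k = xs (⟨k, hkn⟩ : Fin n).castSucc := by
        show xs ⟨min k n, _⟩ = _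
        congr 1 <;> apply Fin.ext <;> simp <;> omega
      have e3 : U (k+1) = u (⟨k, hkn⟩ : Fin n).succ.castSucc := by
        show u ⟨min (k+1) (n+1), _⟩ = _
        congr 1 <;> apply Fin.ext <;> simp <;> omega
      rw [e1, e2, e3]
      exact hudiff_sign ⟨k, hkn⟩
    have := Finset.sum_nonpos hterm
    simp only [mul_zero, zero_mul]
    linarith
  have hexp : ∑ i : Fin (n + 1), (ws i.succ - ws i.castSucc) ^ 2
      = ∑ t : Fin (n+1), (xs t) ^ 2 + 2 * ∑ t : Fin (n+1), xs t * (u t.succ - u t.castSucc)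
        + ∑ t : Fin (n+1), (u t.succ - u t.castSucc) ^ 2 := by
    rw [Finset.mul_sum, ← Finset.sum_add_distrib, ← Finset.sum_add_distrib]
    refine Finset.sum_congr rfl fun t _ => ?_
    have e : ws t.succ - ws t.castSucc = xs t + (u t.succ - u t.castSucc) := by
      have h1 := hwdiff t
      rw [hudef]
      simp only []
      linarith
    rw [e]
    ring
  have hzero : ∑ t : Fin (n+1), (u t.succ - u t.castSucc) ^ 2 ≤ 0 := by
    rw [hobj] at hle
    rw [hexp] at hle
    linarith
  have hz : ∀ t : Fin (n+1), u t.succ - u t.castSucc = 0 := by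
    have hzz : ∑ t : Fin (n+1), (u t.succ - u t.castSucc) ^ 2 = 0 :=
      le_antisymm hzero (Finset.sum_nonneg fun t _ => sq_nonneg _)
    intro t
    have := (Finset.sum_eq_zero_iff_of_nonneg (fun t _ => sq_nonneg
      (u t.succ - u t.castSucc))).mp hzz t (Finset.mem_univ t)
    exact pow_eq_zero_iff (by norm_num) |>.mp this
  intro t
  have h1 := hwdiff t
  have h2 := hz t
  have : ws t.succ - ws t.castSucc = (w t.succ - w t.castSucc) + (u t.succ - u t.castSucc) := by
    rw [hudef]; ring
  rw [this, h1, h2]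
  ring
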